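/- Let H be an n×n real unreduced lower Hessenberg matrix with associated polynomial sequence {q_i}_{0≤i≤n}. Then H is real diagonalizable if and only if all roots of q_n are simple and real. -/

import Mathlib

open Polynomial Matrix

/-- Entry of a matrix viewed with natural-number (0-based) indices; `0` out of range. -/
def entryR {n : ℕ} (H : Matrix (Fin n) (Fin n) ℝ) (i j : ℕ) : ℝ :=
  if h : i < n ∧ j < n then H ⟨i, h.1⟩ ⟨j, h.2⟩ else 0

/-- `H` is an unreduced lower Hessenberg matrix: entries above the superdiagonal vanish
and the superdiagonal entries are nonzero. -/
def IsUnreducedLowerHessenberg {n : ℕ} (H : Matrix (Fin n) (Fin n) ℝ) : Prop :=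
  (∀ i j : ℕ, i + 1 < j → entryR H i j = 0) ∧
  (∀ i : ℕ, i + 1 < n → entryR H i (i + 1) ≠ 0)

/-- `q` is the polynomial sequence associated with the unreduced lower Hessenberg matrix `H`:
`q 0 = 1` and `h_{i,i+1} q_{i+1} = X q_i - ∑_{j ≤ i} h_{i j} q_j` (0-based indices),
with the convention that the superdiagonal entry of the last row is `1`. -/
def IsAssocPolySeq {n : ℕ} (H : Matrix (Fin n) (Fin n) ℝ) (q : ℕ → Polynomial ℝ) : Prop :=
  q 0 = 1 ∧
  ∀ i : ℕ, i < n →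
    Polynomial.C (if i + 1 = n then 1 else entryR H i (i + 1)) * q (i + 1) =
      Polynomial.X * q i - ∑ j ∈ Finset.range (i + 1), Polynomial.C (entryR H i j) * q j

/-- `H` is diagonalizable over the reals. -/
def RealDiagonalizable {n : ℕ} (H : Matrix (Fin n) (Fin n) ℝ) : Prop :=
  ∃ P D : Matrix (Fin n) (Fin n) ℝ, IsUnit P.det ∧ D.IsDiag ∧ H = P * D * P⁻¹

section Aux

variable {n : ℕ}

lemma entryR_eq (H : Matrix (Fin n) (Fin n) ℝ) (i j : ℕ) (hi : i < n) (hj : j < n) :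
    entryR H i j = H ⟨i, hi⟩ ⟨j, hj⟩ := by
  rw [entryR, dif_pos ⟨hi, hj⟩]

/-- An eigenvector of an unreduced lower Hessenberg matrix with vanishing first entry
is zero. -/
lemma eig_zero (H : Matrix (Fin n) (Fin n) ℝ) (hH : IsUnreducedLowerHessenberg H)
    (hn : 0 < n) (lam : ℝ) (x : Fin n → ℝ) (hx : H *ᵥ x = lam • x)
    (h0 : x ⟨0, hn⟩ = 0) : x = 0 := by
  have key : ∀ k, ∀ hk : k < n, x ⟨k, hk⟩ = 0 := by
    intro k
    induction k using Nat.strong_induction_on with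
    | _ k ih =>
      intro hk
      match k, hk with
      | 0, hk => exact h0
      | m + 1, hk =>
        have hm : m < n := lt_trans (Nat.lt_succ_self m) hk
        have hrow := congrFun hx ⟨m, hm⟩
        simp only [Matrix.mulVec, dotProduct, Pi.smul_apply, smul_eq_mul] at hrow
        have hxm : x ⟨m, hm⟩ = 0 := ih m (Nat.lt_succ_self m) hm
        rw [hxm, mul_zero] at hrow
        rw [Finset.sum_eq_single (⟨m + 1, hk⟩ : Fin n)] at hrow
        · have hne : H ⟨m, hm⟩ ⟨m + 1, hk⟩ ≠ 0 := by
            rw [← entryR_eq H m (m + 1) hm hk]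
            exact hH.2 m hk
          rcases mul_eq_zero.1 hrow with h | h
          · exact absurd h hne
          · exact h
        · intro b _ hb
          have hbne : (b : ℕ) ≠ m + 1 := by
            intro hc
            exact hb (Fin.ext hc)
          rcases lt_or_gt_of_ne hbne with hlt | hgt
          · have : x b = 0 := by
              have := ih b.1 hlt b.2
              simpa using this
            rw [this, mul_zero]
          · have : H ⟨m, hm⟩ b = 0 := by
              have := hH.1 m b.1 hgt
              rw [entryR_eq H m b.1 hm b.2] at this
              simpa using this
            rw [this, zero_mul]
        · intro h
          exact absurd (Finset.mem_univ _) h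
  funext i
  have := key i.1 i.2
  simpa using this

/-- Degrees of the associated polynomial sequence. -/
lemma deg_q (H : Matrix (Fin n) (Fin n) ℝ) (hH : IsUnreducedLowerHessenberg H)
    (q : ℕ → Polynomial ℝ) (hq : IsAssocPolySeq H q) :
    ∀ i, i ≤ n → q i ≠ 0 ∧ (q i).natDegree = i := by
  intro i
  induction i using Nat.strong_induction_on with
  | _ i ih =>
    intro hin
    match i, hin with
    | 0, hin =>
      rw [hq.1]
      exact ⟨one_ne_zero, natDegree_one⟩
    | m + 1, hin =>
      have hm : m < n := hin
      have hrec := hq.2 m hm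
      have hqm := ih m (Nat.lt_succ_self m) (le_of_lt hm)
      have hS : (∑ j ∈ Finset.range (m + 1), C (entryR H m j) * q j).natDegree ≤ m := by
        apply natDegree_sum_le_of_forall_le
        intro j hj
        have hj' : j < m + 1 := Finset.mem_range.1 hj
        have := ih j hj' (le_trans (Nat.lt_succ_iff.1 hj') (le_of_lt hm))
        exact le_trans (natDegree_C_mul_le _ _) (by rw [this.2]; omega)
      have hX : (X * q m).natDegree = m + 1 := by
        rw [natDegree_mul X_ne_zero hqm.1, natDegree_X, hqm.2, add_comm]
      have hlt : (∑ j ∈ Finset.range (m + 1), C (entryR H m j) * q j).natDegree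
          < (X * q m).natDegree := by omega
      have hsub : (X * q m - ∑ j ∈ Finset.range (m + 1),
          C (entryR H m j) * q j).natDegree = m + 1 := by
        rw [natDegree_sub_eq_left_of_natDegree_lt hlt, hX]
      have hc : (if m + 1 = n then (1 : ℝ) else entryR H m (m + 1)) ≠ 0 := by
        split
        · exact one_ne_zero
        · next h => exact hH.2 m (lt_of_le_of_ne hin h)
      have hqne : q (m + 1) ≠ 0 := by
        intro h
        rw [h, mul_zero] at hrec
        rw [← hrec] at hsub
        simp at hsub
      refine ⟨hqne, ?_⟩
      have := congrArg Polynomial.natDegree hrec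
      rwa [natDegree_C_mul hc, hsub] at this

/-- The last polynomial has the same roots as the characteristic polynomial. -/
lemma roots_q_eq (hn : 0 < n) (H : Matrix (Fin n) (Fin n) ℝ)
    (hH : IsUnreducedLowerHessenberg H) (q : ℕ → Polynomial ℝ)
    (hq : IsAssocPolySeq H q) : (q n).roots = H.charpoly.roots := by
  classical
  set A := charmatrix H with hA
  have key : A *ᵥ (fun i : Fin n => q i) =
      fun i : Fin n => if (i : ℕ) + 1 = n then q n else 0 := by
    funext i
    show ∑ j, A i j * q (j : ℕ) = _
    have hsplit : ∑ j : Fin n, A i j * q (j : ℕ)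
        = X * q (i : ℕ) - ∑ j : Fin n, C (H i j) * q (j : ℕ) := by
      have hterm : ∀ j : Fin n, A i j * q (j : ℕ) =
          (Matrix.diagonal (fun _ : Fin n => (X : ℝ[X]))) i j * q (j : ℕ)
            - C (H i j) * q (j : ℕ) := by
        intro j
        rw [hA, charmatrix_apply, sub_mul]
      rw [Finset.sum_congr rfl (fun j _ => hterm j), Finset.sum_sub_distrib]
      congr 1
      rw [Finset.sum_eq_single i (fun b _ hb => by
          rw [Matrix.diagonal_apply_ne _ (Ne.symm hb), zero_mul])
        (fun h => absurd (Finset.mem_univ _) h)]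
      try rw [Matrix.diagonal_apply_eq]
    rw [hsplit]
    have hconv : ∑ j : Fin n, C (H i j) * q (j : ℕ)
        = ∑ t ∈ Finset.range n, C (entryR H (i : ℕ) t) * q t := by
      rw [← Fin.sum_univ_eq_sum_range (fun t => C (entryR H (i : ℕ) t) * q t) n]
      apply Finset.sum_congr rfl
      intro j _
      rw [entryR_eq H i.1 j.1 i.2 j.2]
      try simp
    rw [hconv]
    by_cases hin : (i : ℕ) + 1 = n
    · rw [if_pos hin]
      have := hq.2 i.1 i.2
      rw [if_pos hin, Polynomial.C_1, one_mul, hin] at this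
      exact this.symm
    · rw [if_neg hin]
      have hlt : (i : ℕ) + 1 < n := lt_of_le_of_ne i.2 hin
      have hsubset : ∑ t ∈ Finset.range n, C (entryR H (i : ℕ) t) * q t
          = ∑ t ∈ Finset.range ((i : ℕ) + 2), C (entryR H (i : ℕ) t) * q t := by
        symm
        apply Finset.sum_subset (Finset.range_subset_range.2 hlt)
        intro t _ ht
        have : (i : ℕ) + 1 < t := by
          simp only [Finset.mem_range, not_lt] at ht
          omega
        rw [hH.1 i.1 t this, map_zero, zero_mul]
      rw [hsubset, Finset.sum_range_succ]
      have := hq.2 i.1 i.2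
      rw [if_neg hin] at this
      linear_combination -this
  have h2 : H.charpoly • (fun i : Fin n => q (i : ℕ)) =
      A.adjugate *ᵥ (fun i : Fin n => if (i : ℕ) + 1 = n then q n else 0) := by
    rw [← key, mulVec_mulVec, adjugate_mul]
    show _ = (Matrix.charpoly H • (1 : Matrix (Fin n) (Fin n) ℝ[X])) *ᵥ _
    rw [smul_mulVec, one_mulVec]
  have h3 := congrFun h2 ⟨0, hn⟩
  simp only [Pi.smul_apply, smul_eq_mul, hq.1, mul_one] at h3
  have hlast : (n - 1) < n := Nat.sub_lt hn one_pos
  have h4 : A.adjugate *ᵥ (fun i : Fin n => if (i : ℕ) + 1 = n then q n else 0) =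
      fun r : Fin n => A.adjugate r ⟨n - 1, hlast⟩ * q n := by
    funext r
    show ∑ j, A.adjugate r j * _ = _
    rw [Finset.sum_eq_single (⟨n - 1, hlast⟩ : Fin n)]
    · rw [if_pos (by simp; omega)]
    · intro b _ hb
      rw [if_neg, mul_zero]
      intro hc
      apply hb
      apply Fin.ext
      simp only []
      omega
    · intro h
      exact absurd (Finset.mem_univ _) h
  rw [h4] at h3
  have h5 : H.charpoly = A.adjugate ⟨0, hn⟩ ⟨n - 1, hlast⟩ * q n := h3
  generalize A.adjugate ⟨0, hn⟩ ⟨n - 1, hlast⟩ = g at h5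
  have hqn := deg_q H hH q hq n le_rfl
  have hchne : H.charpoly ≠ 0 := (Matrix.charpoly_monic H).ne_zero
  have hgne : g ≠ 0 := by
    intro h
    rw [h, zero_mul] at h5
    exact hchne h5
  have hdeg : H.charpoly.natDegree = n := by
    rw [Matrix.charpoly_natDegree_eq_dim, Fintype.card_fin]
  have hgdeg : g.natDegree = 0 := by
    have := congrArg Polynomial.natDegree h5
    rw [hdeg, natDegree_mul hgne hqn.1, hqn.2] at this
    omega
  obtain ⟨c, hc⟩ : ∃ c : ℝ, g = C c := ⟨g.coeff 0, eq_C_of_natDegree_eq_zero hgdeg⟩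
  have hcne : c ≠ 0 := by
    intro h
    rw [h, map_zero] at hc
    exact hgne hc
  rw [h5, hc, roots_C_mul _ hcne]

/-- A conjugation by an invertible matrix preserves the characteristic polynomial. -/
lemma charpoly_conj_eq (P D : Matrix (Fin n) (Fin n) ℝ) (hP : IsUnit P.det) :
    (P * D * P⁻¹).charpoly = D.charpoly := by
  have h1 : P * P⁻¹ = 1 := mul_nonsing_inv P hP
  set f : Matrix (Fin n) (Fin n) ℝ →+* Matrix (Fin n) (Fin n) ℝ[X] :=
    (C : ℝ →+* ℝ[X]).mapMatrix with hf
  have key : charmatrix (P * D * P⁻¹) = f P * charmatrix D * f P⁻¹ := by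
    show Matrix.scalar (Fin n) (X : ℝ[X]) - f (P * D * P⁻¹)
      = f P * (Matrix.scalar (Fin n) (X : ℝ[X]) - f D) * f P⁻¹
    rw [mul_sub, sub_mul]
    congr 1
    · have hcomm : f P * Matrix.scalar (Fin n) (X : ℝ[X])
          = Matrix.scalar (Fin n) (X : ℝ[X]) * f P :=
        (scalar_commute (X : ℝ[X]) (fun r' => Commute.all _ _) (f P)).symm
      rw [hcomm, mul_assoc, ← _root_.map_mul, h1, _root_.map_one, mul_one]
    · rw [← _root_.map_mul, ← _root_.map_mul]
  show (charmatrix (P * D * P⁻¹)).det = (charmatrix D).det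
  rw [key, det_mul, det_mul]
  have : (f P).det * (f P⁻¹).det = 1 := by
    rw [hf, ← RingHom.map_det, ← RingHom.map_det, ← _root_.map_mul, ← det_mul, h1, det_one, _root_.map_one]
  calc (f P).det * (charmatrix D).det * (f P⁻¹).det
      = (charmatrix D).det * ((f P).det * (f P⁻¹).det) := by ring
    _ = (charmatrix D).det := by rw [this, mul_one]

/-- The characteristic-polynomial version of the main equivalence. -/
lemma realDiagonalizable_iff_charpoly (hn : 0 < n) (H : Matrix (Fin n) (Fin n) ℝ)
    (hH : IsUnreducedLowerHessenberg H) :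
    RealDiagonalizable H ↔ H.charpoly.roots.toFinset.card = n := by
  classical
  constructor
  · rintro ⟨P, D, hP, hD, hPDP⟩
    set d : Fin n → ℝ := Matrix.diag D with hd
    have hD' : D = diagonal d := hD.diagonal_diag.symm
    have hch : H.charpoly = D.charpoly := by rw [hPDP, charpoly_conj_eq P D hP]
    have hcm : charmatrix D = diagonal (fun i => X - C (d i)) := by
      funext i j
      by_cases h : i = j
      · subst h
        rw [charmatrix_apply_eq, Matrix.diagonal_apply_eq (fun i => X - C (d i)) i]
        rfl
      · rw [charmatrix_apply_ne _ _ _ h,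
          Matrix.diagonal_apply_ne (fun i => X - C (d i)) h, hD h, map_zero, neg_zero]
    have hchD : D.charpoly = ∏ i : Fin n, (X - C (d i)) := by
      show (charmatrix D).det = _
      rw [hcm, det_diagonal]
    have hroots : H.charpoly.roots = Multiset.map d Finset.univ.val := by
      rw [hch, hchD, roots_prod _ _ (monic_prod_of_monic _ _
        (fun i _ => monic_X_sub_C (d i))).ne_zero]
      simp [roots_X_sub_C, Multiset.bind_singleton]
    -- injectivity of d
    have hinj : Function.Injective d := by
      intro i j hij
      by_contra hne
      have hHP : H * P = P * D := by
        rw [hPDP, mul_assoc, mul_assoc, nonsing_inv_mul P hP, mul_one]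
      set u : Fin n → ℝ := fun r => P r i with hu
      set w : Fin n → ℝ := fun r => P r j with hw
      have heigcol : ∀ k : Fin n, H *ᵥ (fun r => P r k) = d k • (fun r => P r k) := by
        intro k
        funext r
        have h1 : (H * P) r k = (P * D) r k := by rw [hHP]
        rw [hD', mul_diagonal] at h1
        show (H *ᵥ fun r => P r k) r = _
        have : (H *ᵥ fun r => P r k) r = (H * P) r k := by
          simp [Matrix.mulVec, Matrix.mul_apply, dotProduct]
        rw [this, h1]
        simp [mul_comm]
      have heigu : H *ᵥ u = d i • u := heigcol i
      have heigw : H *ᵥ w = d i • w := by rw [hij]; exact heigcol j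
      have hmvinj : Function.Injective P.mulVec :=
        mulVec_injective_iff_isUnit.2 ((isUnit_iff_isUnit_det P).2 hP)
      have hcolu : P *ᵥ Pi.single i 1 = u := by
        funext r
        rw [mulVec_single]
        simp [hu]
      have hcolw : P *ᵥ Pi.single j 1 = w := by
        funext r
        rw [mulVec_single]
        simp [hw]
      have hu0 : u ⟨0, hn⟩ ≠ 0 := by
        intro h
        have := eig_zero H hH hn (d i) u heigu h
        rw [this] at hcolu
        have h0 : P *ᵥ Pi.single i 1 = P *ᵥ 0 := by rw [hcolu, mulVec_zero]
        have := hmvinj h0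
        have := congrFun this i
        simp at this
      have hw0 : w ⟨0, hn⟩ ≠ 0 := by
        intro h
        have := eig_zero H hH hn (d i) w heigw h
        rw [this] at hcolw
        have h0 : P *ᵥ Pi.single j 1 = P *ᵥ 0 := by rw [hcolw, mulVec_zero]
        have := hmvinj h0
        have := congrFun this j
        simp at this
      set z : Fin n → ℝ := fun r => w ⟨0, hn⟩ * u r - u ⟨0, hn⟩ * w r with hz
      have heigz : H *ᵥ z = d i • z := by
        funext r
        have h1 := congrFun heigu r
        have h2 := congrFun heigw r
        simp only [Matrix.mulVec, dotProduct, Pi.smul_apply, smul_eq_mul] at h1 h2 ⊢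
        have e1 : ∑ s, H r s * (w ⟨0, hn⟩ * u s) = w ⟨0, hn⟩ * ∑ s, H r s * u s := by
          rw [Finset.mul_sum]
          exact Finset.sum_congr rfl fun s _ => by ring
        have e2 : ∑ s, H r s * (u ⟨0, hn⟩ * w s) = u ⟨0, hn⟩ * ∑ s, H r s * w s := by
          rw [Finset.mul_sum]
          exact Finset.sum_congr rfl fun s _ => by ring
        calc ∑ s, H r s * z s
            = ∑ s, (H r s * (w ⟨0, hn⟩ * u s) - H r s * (u ⟨0, hn⟩ * w s)) := by
              apply Finset.sum_congr rfl
              intro s _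
              rw [hz]
              ring
          _ = w ⟨0, hn⟩ * ∑ s, H r s * u s - u ⟨0, hn⟩ * ∑ s, H r s * w s := by
              rw [Finset.sum_sub_distrib, e1, e2]
          _ = d i * z r := by rw [h1, h2, hz]; ring
      have hz0 : z ⟨0, hn⟩ = 0 := by
        rw [hz]
        ring
      have hzzero : z = 0 := eig_zero H hH hn (d i) z heigz hz0
      have hrel : ∀ r, w ⟨0, hn⟩ * u r = u ⟨0, hn⟩ * w r := by
        intro r
        have := congrFun hzzero r
        rw [hz] at this
        simp only [Pi.zero_apply] at this
        linarith
      have hfin : P *ᵥ (w ⟨0, hn⟩ • (Pi.single i 1 : Fin n → ℝ))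
          = P *ᵥ (u ⟨0, hn⟩ • (Pi.single j 1 : Fin n → ℝ)) := by
        rw [mulVec_smul, mulVec_smul, hcolu, hcolw]
        funext r
        simpa using hrel r
      have := hmvinj hfin
      have := congrFun this i
      rw [Pi.smul_apply, Pi.smul_apply, Pi.single_eq_same,
        Pi.single_eq_of_ne hne] at this
      simp at this
      exact hw0 this
    rw [hroots, Multiset.toFinset_map]
    rw [Finset.card_image_of_injective _ hinj]
    simp [Finset.card_univ]
  · intro hcard
    set p := H.charpoly with hp
    set s := p.roots.toFinset with hs
    have hroot : ∀ μ : {x // x ∈ s}, ∃ v : Fin n → ℝ, v ≠ 0 ∧ H *ᵥ v = (μ : ℝ) • v := by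
      rintro ⟨r, hr⟩
      have hr' : r ∈ p.roots := Multiset.mem_toFinset.1 hr
      have hev : p.eval r = 0 := (mem_roots'.1 hr').2
      set B := Matrix.diagonal (fun _ : Fin n => r) - H with hB
      have hmap : (charmatrix H).map (eval r) = B := by
        ext i j
        by_cases h : i = j
        · subst h
          simp [charmatrix_apply_eq, hB, Matrix.sub_apply]
        · simp [charmatrix_apply_ne _ _ _ h, hB, Matrix.sub_apply, diagonal_apply_ne _ h]
      have hdet : B.det = 0 := by
        have h1 := RingHom.map_det (evalRingHom r) (charmatrix H)
        rw [RingHom.mapMatrix_apply] at h1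
        have h2 : (charmatrix H).map ⇑(evalRingHom r) = B := by
          rw [coe_evalRingHom, hmap]
        rw [h2] at h1
        rw [← h1]
        exact hev
      obtain ⟨v, hv0, hv⟩ := (Matrix.exists_mulVec_eq_zero_iff).2 hdet
      refine ⟨v, hv0, ?_⟩
      rw [hB, sub_mulVec] at hv
      have hdiag : Matrix.diagonal (fun _ : Fin n => r) *ᵥ v = r • v := by
        funext x
        rw [mulVec_diagonal]
        simp
      rw [hdiag] at hv
      have := sub_eq_zero.1 hv
      exact this.symm
    choose vec hvne hveig using hroot
    set e : {x // x ∈ s} ≃ Fin n := s.equivFinOfCardEq hcard with he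
    set ε := e.symm with hε
    set d : Fin n → ℝ := fun k => (ε k : ℝ) with hd
    have hdinj : Function.Injective d :=
      fun a b hab => ε.injective (Subtype.coe_injective hab)
    set vc : Fin n → (Fin n → ℝ) := fun k => vec (ε k) with hvc
    have hli : LinearIndependent ℝ vc := by
      apply Module.End.eigenvectors_linearIndependent' (Matrix.mulVecLin H) d hdinj
      intro k
      refine ⟨Module.End.mem_eigenspace_iff.2 ?_, hvne (ε k)⟩
      rw [Matrix.mulVecLin_apply]
      exact hveig (ε k)
    set P : Matrix (Fin n) (Fin n) ℝ := Matrix.of (fun r k => vc k r) with hP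
    have hPt : (fun k => Pᵀ k) = vc := rfl
    have hPunit : IsUnit P := by
      rw [← linearIndependent_cols_iff_isUnit]
      exact hli
    have hPdet : IsUnit P.det := (isUnit_iff_isUnit_det P).1 hPunit
    refine ⟨P, diagonal d, hPdet, isDiag_diagonal d, ?_⟩
    have hHP : H * P = P * diagonal d := by
      ext r k
      rw [mul_diagonal]
      have h1 : (H * P) r k = (H *ᵥ vc k) r := by
        simp [Matrix.mul_apply, Matrix.mulVec, dotProduct, hP]
      rw [h1, hveig (ε k)]
      simp [hP, mul_comm]
      rfl
    calc H = H * (P * P⁻¹) := by rw [mul_nonsing_inv P hPdet, mul_one]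
      _ = (H * P) * P⁻¹ := by rw [mul_assoc]
      _ = P * diagonal d * P⁻¹ := by rw [hHP]

end Aux

/-- an unreduced lower Hessenberg matrix is real diagonalizable iff all
roots of `q n` are simple and real, i.e. iff `q n` (which has degree `n`) has `n`
distinct real roots. -/
theorem realDiagonalizable_iff_qn_simple_real_roots {n : ℕ}
    (H : Matrix (Fin n) (Fin n) ℝ) (hH : IsUnreducedLowerHessenberg H)
    (q : ℕ → Polynomial ℝ) (hq : IsAssocPolySeq H q) :
    RealDiagonalizable H ↔ (q n).roots.toFinset.card = n := by
  rcases Nat.eq_zero_or_pos n with hn | hn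
  · subst hn
    constructor
    · intro _
      rw [hq.1]
      simp
    · intro _
      refine ⟨1, 0, by simp, fun i j _ => rfl, ?_⟩
      ext i j
      exact i.elim0
  · rw [roots_q_eq hn H hH q hq]
    exact realDiagonalizable_iff_charpoly hn H hH
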